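/- arXiv:1002.3345 — 4 statements merged into one kernel-verified Lean document; each statement's English description precedes it below -/
import Mathlib

section
/- The approximate-learning objective F_h(Ŝ) = |H \ V(Ŝ)|·(|X| - κ) + Σ_{h' ∈ V(Ŝ)} min(|X| - κ, Σ_{x ∈ X} I(h'(x) = h(x))) is submodular and monotone non-decreasing as a function of the finite set Ŝ of question-response pairs. -/
open scoped Classical

def Submodular {α : Type*} [DecidableEq α] (F : Finset α → ℝ) : Prop :=
  ∀ A B : Finset α, A ⊆ B → ∀ v ∉ B, F (insert v B) - F B ≤ F (insert v A) - F A

def MonotoneSet {α : Type*} (F : Finset α → ℝ) : Prop :=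
  ∀ A B : Finset α, A ⊆ B → F A ≤ F B

noncomputable def versionSpace {H Q R : Type*} [Fintype H]
    (q : Q → H → Finset R) (S : Finset (Q × R)) : Finset H :=
  Finset.univ.filter (fun h : H => ∀ p ∈ S, p.2 ∈ q p.1 h)

theorem approxLearning_submodular_monotone
    {H Q R X Y : Type*} [Fintype H] [Fintype Q] [Fintype R] [Fintype X]
    (hyp : H → X → Y) (q : Q → H → Finset R)
    (hq : ∀ (qq : Q) (h' : H), (q qq h').Nonempty)
    (κ : ℕ) (hκ : κ ≤ Fintype.card X) (h : H) :
    Submodular (fun S : Finset (Q × R) =>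
        ((Finset.univ \ versionSpace q S).card * (Fintype.card X - κ) : ℝ) +
        ∑ h' ∈ versionSpace q S,
          min ((Fintype.card X - κ : ℕ) : ℝ)
            ((Finset.univ.filter (fun x : X => hyp h' x = hyp h x)).card : ℝ)) ∧
    MonotoneSet (fun S : Finset (Q × R) =>
        ((Finset.univ \ versionSpace q S).card * (Fintype.card X - κ) : ℝ) +
        ∑ h' ∈ versionSpace q S,
          min ((Fintype.card X - κ : ℕ) : ℝ)
            ((Finset.univ.filter (fun x : X => hyp h' x = hyp h x)).card : ℝ)) := by
  classical
  set c : ℝ := ((Fintype.card X - κ : ℕ) : ℝ) with hcdef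
  set m : H → ℝ := fun h' =>
    min c ((Finset.univ.filter (fun x : X => hyp h' x = hyp h x)).card : ℝ) with hmdef
  have hmc : ∀ h', m h' ≤ c := fun h' => min_le_left _ _
  have hcast : (c : ℝ) = (Fintype.card X : ℝ) - κ := by
    simp [hcdef, Nat.cast_sub hκ]
  have hF : ∀ S : Finset (Q × R),
      ((Finset.univ \ versionSpace q S).card * (Fintype.card X - κ) : ℝ) +
        (versionSpace q S).sum m
      = ∑ h' : H, (if h' ∈ versionSpace q S then m h' else c) := by
    intro S
    have key : ∑ h' : H, (if h' ∈ versionSpace q S then m h' else c)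
        = (∑ h' ∈ versionSpace q S, m h') +
          ((Finset.univ \ versionSpace q S).card : ℝ) * c := by
      have e1 : Finset.univ.filter (fun h' : H => h' ∈ versionSpace q S)
          = versionSpace q S := by ext h'; simp
      have e2 : Finset.univ.filter (fun h' : H => h' ∉ versionSpace q S)
          = Finset.univ \ versionSpace q S := by ext h'; simp
      rw [Finset.sum_ite, Finset.sum_const, nsmul_eq_mul, e1, e2]
    rw [key, hcast, add_comm]
  have hmemins : ∀ (h' : H) (v : Q × R) (S : Finset (Q × R)),
      h' ∈ versionSpace q (insert v S) ↔
        h' ∈ versionSpace q S ∧ v.2 ∈ q v.1 h' := by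
    intro h' v S
    simp only [versionSpace, Finset.mem_filter, Finset.mem_univ, true_and,
      Finset.forall_mem_insert]
    tauto
  have hanti : ∀ A B : Finset (Q × R), A ⊆ B →
      versionSpace q B ⊆ versionSpace q A := by
    intro A B hAB h'
    simp only [versionSpace, Finset.mem_filter, Finset.mem_univ, true_and]
    intro hB p hp
    exact hB p (hAB hp)
  constructor
  · intro A B hAB v hv
    simp only [hF]
    rw [← Finset.sum_sub_distrib, ← Finset.sum_sub_distrib]
    apply Finset.sum_le_sum
    intro h' _
    by_cases hB : h' ∈ versionSpace q B
    · have hA : h' ∈ versionSpace q A := hanti A B hAB hB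
      by_cases ht : v.2 ∈ q v.1 h'
      · simp [hmemins, hB, hA, ht]
      · simp [hmemins, hB, hA, ht]
    · by_cases hA : h' ∈ versionSpace q A
      · by_cases ht : v.2 ∈ q v.1 h'
        · simp [hmemins, hB, hA, ht, hmc h']
        · simp [hmemins, hB, hA, ht, hmc h']
      · simp [hmemins, hB, hA]
  · intro A B hAB
    simp only [hF]
    apply Finset.sum_le_sum
    intro h' _
    by_cases hB : h' ∈ versionSpace q B
    · have hA : h' ∈ versionSpace q A := hanti A B hAB hB
      simp [hA, hB]
    · by_cases hA : h' ∈ versionSpace q A <;> simp [hA, hB, hmc h']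
end

section
/- The combined objective F̄_α(Ŝ) = (1/|H|)·(Σ_{h ∈ V(Ŝ)} min(α, F_h(Ŝ)) + α·|H \ V(Ŝ)|) is submodular and monotone non-decreasing whenever each F_h is submodular and monotone non-decreasing and α ≥ 0. -/
open scoped Classical

/-- The combined objective `F̄_α`. -/
noncomputable def Fbar {H Q R : Type*} [Fintype H]
    (q : Q → H → Finset R) (F : H → Finset (Q × R) → ℝ) (α : ℝ)
    (S : Finset (Q × R)) : ℝ :=
  (1 / (Fintype.card H : ℝ)) *
    ((∑ h ∈ versionSpace q S, min α (F h S)) +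
      α * ((Finset.univ \ versionSpace q S).card : ℝ))

lemma trunc_ineq {c a a' b b' : ℝ} (hab : a ≤ b) (ha : a ≤ a') (hb : b ≤ b')
    (ha'b' : a' ≤ b') (hs : b' - b ≤ a' - a) :
    min c b' - min c b ≤ min c a' - min c a := by
  rcases le_total c b with h1 | h1
  · rw [min_eq_left h1, min_eq_left (h1.trans hb)]
    have := min_le_min (le_refl c) ha
    linarith
  · rw [min_eq_right h1, min_eq_right (hab.trans h1)]
    rcases le_total c b' with h2 | h2
    · rw [min_eq_left h2]
      rcases le_total c a' with h3 | h3
      · rw [min_eq_left h3]; linarith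
      · rw [min_eq_right h3]; linarith
    · rw [min_eq_right h2, min_eq_right (ha'b'.trans h2)]
      linarith

theorem Fbar_submodular_monotone
    {H Q R : Type*} [Fintype H] [Fintype Q] [Fintype R] [Nonempty H]
    (q : Q → H → Finset R) (hq : ∀ (qq : Q) (h : H), (q qq h).Nonempty)
    (F : H → Finset (Q × R) → ℝ)
    (hsub : ∀ h, Submodular (F h)) (hmono : ∀ h, MonotoneSet (F h))
    (hzero : ∀ h, F h ∅ = 0) (α : ℝ) (hα : 0 ≤ α) :
    Submodular (Fbar q F α) ∧ MonotoneSet (Fbar q F α) := by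
  classical
  set G : H → Finset (Q × R) → ℝ :=
    fun h S => if h ∈ versionSpace q S then min α (F h S) else α with hG
  have hmem : ∀ (S : Finset (Q × R)) (h : H),
      h ∈ versionSpace q S ↔ ∀ p ∈ S, p.2 ∈ q p.1 h := by
    intro S h; simp [versionSpace]
  have hanti : ∀ A B : Finset (Q × R), A ⊆ B →
      versionSpace q B ⊆ versionSpace q A := by
    intro A B hAB h hh
    rw [hmem] at *
    exact fun p hp => hh p (hAB hp)
  have hins : ∀ (v : Q × R) (S : Finset (Q × R)) (h : H),
      h ∈ versionSpace q (insert v S) ↔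
        v.2 ∈ q v.1 h ∧ h ∈ versionSpace q S := by
    intro v S h
    simp only [hmem, Finset.forall_mem_insert]
  have hGmono : ∀ h, MonotoneSet (G h) := by
    intro h A B hAB
    simp only [hG]
    by_cases hB : h ∈ versionSpace q B
    · have hA : h ∈ versionSpace q A := hanti A B hAB hB
      rw [if_pos hA, if_pos hB]
      exact min_le_min le_rfl (hmono h A B hAB)
    · rw [if_neg hB]
      by_cases hA : h ∈ versionSpace q A
      · rw [if_pos hA]; exact min_le_left _ _
      · rw [if_neg hA]
  have hGsub : ∀ h, Submodular (G h) := by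
    intro h A B hAB v hv
    simp only [hG]
    by_cases hc : v.2 ∈ q v.1 h
    · have hiA : h ∈ versionSpace q (insert v A) ↔ h ∈ versionSpace q A := by
        rw [hins]; tauto
      have hiB : h ∈ versionSpace q (insert v B) ↔ h ∈ versionSpace q B := by
        rw [hins]; tauto
      by_cases hB : h ∈ versionSpace q B
      · have hA := hanti A B hAB hB
        rw [if_pos (hiA.mpr hA), if_pos (hiB.mpr hB), if_pos hA, if_pos hB]
        exact trunc_ineq (hmono h A B hAB)
          (hmono h A (insert v A) (Finset.subset_insert _ _))
          (hmono h B (insert v B) (Finset.subset_insert _ _))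
          (hmono h _ _ (Finset.insert_subset_insert _ hAB))
          (hsub h A B hAB v hv)
      · rw [if_neg (fun hh => hB (hiB.mp hh)), if_neg hB]
        by_cases hA : h ∈ versionSpace q A
        · rw [if_pos (hiA.mpr hA), if_pos hA]
          have h2 : min α (F h A) ≤ min α (F h (insert v A)) :=
            min_le_min le_rfl (hmono h A (insert v A) (Finset.subset_insert _ _))
          linarith
        · rw [if_neg (fun hh => hA (hiA.mp hh)), if_neg hA]
    · have hiA : h ∉ versionSpace q (insert v A) := fun hh => hc ((hins _ _ _).mp hh).1
      have hiB : h ∉ versionSpace q (insert v B) := fun hh => hc ((hins _ _ _).mp hh).1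
      rw [if_neg hiA, if_neg hiB]
      by_cases hB : h ∈ versionSpace q B
      · have hA := hanti A B hAB hB
        rw [if_pos hA, if_pos hB]
        have := min_le_min (le_refl α) (hmono h A B hAB)
        linarith
      · rw [if_neg hB]
        by_cases hA : h ∈ versionSpace q A
        · rw [if_pos hA]
          have := min_le_left α (F h A)
          linarith
        · rw [if_neg hA]
  have hFbar : ∀ S, Fbar q F α S = (1 / (Fintype.card H : ℝ)) * ∑ h, G h S := by
    intro S
    unfold Fbar
    congr 1
    have hVsub : versionSpace q S ⊆ Finset.univ := Finset.subset_univ _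
    rw [← Finset.sum_sdiff hVsub]
    have h1 : ∑ h ∈ versionSpace q S, G h S
        = ∑ h ∈ versionSpace q S, min α (F h S) :=
      Finset.sum_congr rfl (fun h hh => if_pos hh)
    have h2 : ∑ h ∈ Finset.univ \ versionSpace q S, G h S
        = α * ((Finset.univ \ versionSpace q S).card : ℝ) := by
      rw [Finset.sum_congr rfl (fun h hh => if_neg (Finset.mem_sdiff.mp hh).2),
        Finset.sum_const, nsmul_eq_mul, mul_comm]
    rw [h1, h2]; ring
  have hnn : (0 : ℝ) ≤ 1 / (Fintype.card H : ℝ) := by positivity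
  constructor
  · intro A B hAB v hv
    rw [hFbar, hFbar, hFbar, hFbar, ← mul_sub, ← mul_sub]
    apply mul_le_mul_of_nonneg_left _ hnn
    rw [← Finset.sum_sub_distrib, ← Finset.sum_sub_distrib]
    exact Finset.sum_le_sum (fun h _ => hGsub h A B hAB v hv)
  · intro A B hAB
    rw [hFbar, hFbar]
    apply mul_le_mul_of_nonneg_left _ hnn
    exact Finset.sum_le_sum (fun h _ => hGmono h A B hAB)
end

section
/- The auxiliary function F̂_{α,h}(Ŝ) defined to equal min(α, F_h(Ŝ)) when h ∈ V(Ŝ) and α when h ∉ V(Ŝ) is submodular and monotone non-decreasing, for any fixed h ∈ H, whenever F_h is nonnegative, submodular, and monotone non-decreasing and α ≥ 0. -/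
open scoped Classical

theorem Fhat_submodular_monotone
    {H Q R : Type*} [Fintype H] [Fintype Q] [Fintype R]
    (q : Q → H → Finset R) (hq : ∀ (qq : Q) (h' : H), (q qq h').Nonempty)
    (h : H) (F : Finset (Q × R) → ℝ)
    (hnonneg : ∀ S, 0 ≤ F S) (hsub : Submodular F) (hmono : MonotoneSet F)
    (α : ℝ) (hα : 0 ≤ α) :
    Submodular (fun S : Finset (Q × R) =>
        if h ∈ versionSpace q S then min α (F S) else α) ∧
    MonotoneSet (fun S : Finset (Q × R) =>
        if h ∈ versionSpace q S then min α (F S) else α) := by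
  have memV : ∀ S : Finset (Q × R), h ∈ versionSpace q S ↔ ∀ p ∈ S, p.2 ∈ q p.1 h := by
    intro S; simp [versionSpace]
  set G : Finset (Q × R) → ℝ :=
    fun S => if h ∈ versionSpace q S then min α (F S) else α with hG
  have hGle : ∀ S, G S ≤ α := by
    intro S; simp only [hG]; split
    · exact min_le_left _ _
    · exact le_rfl
  have hmonoG : MonotoneSet G := by
    intro A B hAB
    by_cases hB : h ∈ versionSpace q B
    · have hA : h ∈ versionSpace q A := (memV A).2 fun p hp => (memV B).1 hB p (hAB hp)
      simp only [hG, if_pos hA, if_pos hB]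
      exact min_le_min le_rfl (hmono A B hAB)
    · simp only [hG, if_neg hB]
      exact hGle A
  refine ⟨?_, hmonoG⟩
  intro A B hAB v hv
  by_cases hc : v.2 ∈ q v.1 h
  · have hins : ∀ S : Finset (Q × R), h ∈ versionSpace q S →
        h ∈ versionSpace q (insert v S) := by
      intro S hS
      refine (memV _).2 ?_
      intro p hp
      rcases Finset.mem_insert.1 hp with h1 | h1
      · subst h1; exact hc
      · exact (memV S).1 hS p h1
    by_cases hB : h ∈ versionSpace q B
    · have hA : h ∈ versionSpace q A := (memV A).2 fun p hp => (memV B).1 hB p (hAB hp)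
      simp only [hG, if_pos hA, if_pos hB, if_pos (hins A hA), if_pos (hins B hB)]
      have h1 : F A ≤ F B := hmono A B hAB
      have h2 : F A ≤ F (insert v A) := hmono _ _ (Finset.subset_insert _ _)
      have h3 : F B ≤ F (insert v B) := hmono _ _ (Finset.subset_insert _ _)
      have h4 : F (insert v A) ≤ F (insert v B) :=
        hmono _ _ (Finset.insert_subset_insert _ hAB)
      have h5 := hsub A B hAB v hv
      simp only [min_def]
      split_ifs <;> linarith
    · have hB' : h ∉ versionSpace q (insert v B) := by
        intro hcon
        exact hB ((memV B).2 fun p hp => (memV _).1 hcon p (Finset.mem_insert_of_mem hp))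
      simp only [hG, if_neg hB, if_neg hB']
      have hGA : G A ≤ G (insert v A) := hmonoG A _ (Finset.subset_insert _ _)
      simp only [hG] at hGA
      linarith
  · have hnA : h ∉ versionSpace q (insert v A) := fun hcon =>
      hc ((memV _).1 hcon v (Finset.mem_insert_self _ _))
    have hnB : h ∉ versionSpace q (insert v B) := fun hcon =>
      hc ((memV _).1 hcon v (Finset.mem_insert_self _ _))
    simp only [hG, if_neg hnA, if_neg hnB]
    have hGAB := hmonoG A B hAB
    simp only [hG] at hGAB
    linarith
end

section
/- Suppose F̄ is a monotone non-decreasing submodular function on finite subsets of Q × R, Ŝ is a set of question-response pairs with F̄(Ŝ) < α, and suppose for every question q ∈ Q there exists a response r(q) such that F̄(Ŝ ∪ {(q, r(q))}) - F̄(Ŝ) < c(q)·(α - F̄(Ŝ))/K, where c : Q → ℝ₊ and K > 0. Then for every finite sequence Q̂ of questions with total cost Σ_{q ∈ Q̂} c(q) ≤ K, we have F̄(Ŝ ∪ {(q, r(q)) : q ∈ Q̂}) < α. -/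
lemma submod_sum_bound {α : Type*} [DecidableEq α] (F : Finset α → ℝ)
    (hsub : Submodular F) (hmono : MonotoneSet F) (S : Finset α) :
    ∀ T : Finset α, F (S ∪ T) ≤ F S + ∑ t ∈ T, (F (insert t S) - F S) := by
  intro T
  induction T using Finset.induction_on with
  | empty => simp
  | @insert a T' ha ih =>
    rw [Finset.sum_insert ha]
    have hmarg : 0 ≤ F (insert a S) - F S := by
      have := hmono S (insert a S) (Finset.subset_insert _ _); linarith
    by_cases hmem : a ∈ S ∪ T'
    · have : S ∪ insert a T' = S ∪ T' := by
        rw [Finset.union_insert, Finset.insert_eq_self.2 hmem]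
      rw [this]; linarith
    · have hkey := hsub S (S ∪ T') Finset.subset_union_left a hmem
      have : S ∪ insert a T' = insert a (S ∪ T') := by
        rw [Finset.union_insert]
      rw [this]; linarith

lemma sum_image_le' {β γ : Type*} [DecidableEq β] [DecidableEq γ] (s : Finset β) (f : β → γ)
    (g : γ → ℝ) (hg : ∀ b ∈ s, 0 ≤ g (f b)) :
    ∑ t ∈ s.image f, g t ≤ ∑ b ∈ s, g (f b) := by
  induction s using Finset.induction_on with
  | empty => simp
  | @insert a s' ha ih =>
    rw [Finset.image_insert, Finset.sum_insert ha]
    have ih' := ih (fun b hb => hg b (Finset.mem_insert_of_mem hb))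
    have hga := hg a (Finset.mem_insert_self a s')
    by_cases hmem : f a ∈ s'.image f
    · rw [Finset.insert_eq_self.2 hmem]; linarith
    · rw [Finset.sum_insert hmem]; linarith

theorem no_cheap_cover_if_all_gains_small
    {Q R : Type*} [Fintype Q] [Fintype R] [DecidableEq Q] [DecidableEq R]
    (F : Finset (Q × R) → ℝ) (hsub : Submodular F) (hmono : MonotoneSet F)
    (c : Q → ℝ) (hc : ∀ q, 0 < c q) (K : ℝ) (hK : 0 < K) (α : ℝ)
    (S : Finset (Q × R)) (hS : F S < α)
    (r : Q → R)
    (hgain : ∀ q : Q, F (insert (q, r q) S) - F S < c q * (α - F S) / K) :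
    ∀ Qhat : Finset Q, (∑ q ∈ Qhat, c q) ≤ K →
      F (S ∪ Qhat.image (fun q => (q, r q))) < α := by
  intro Qhat hcost
  rcases Qhat.eq_empty_or_nonempty with rfl | hne
  · simpa using hS
  have h1 := submod_sum_bound F hsub hmono S (Qhat.image (fun q => (q, r q)))
  have h2 : ∑ t ∈ Qhat.image (fun q => (q, r q)), (F (insert t S) - F S)
      ≤ ∑ q ∈ Qhat, (F (insert (q, r q) S) - F S) := by
    apply sum_image_le'
    intro q _
    have := hmono S (insert (q, r q) S) (Finset.subset_insert _ _); linarith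
  have h3 : ∑ q ∈ Qhat, (F (insert (q, r q) S) - F S)
      < ∑ q ∈ Qhat, c q * (α - F S) / K :=
    Finset.sum_lt_sum_of_nonempty hne (fun q _ => hgain q)
  have h4 : ∑ q ∈ Qhat, c q * (α - F S) / K ≤ α - F S := by
    have : ∑ q ∈ Qhat, c q * (α - F S) / K = (∑ q ∈ Qhat, c q) * ((α - F S) / K) := by
      rw [Finset.sum_mul]; congr 1; ext q; ring
    rw [this]
    have hpos : 0 ≤ (α - F S) / K := div_nonneg (by linarith) hK.le
    calc (∑ q ∈ Qhat, c q) * ((α - F S) / K) ≤ K * ((α - F S) / K) :=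
          mul_le_mul_of_nonneg_right hcost hpos
      _ = α - F S := by field_simp
  linarith
end
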